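/- Let (Ω, 𝒜, P) be a probability space, X : Ω → 𝒳 a measurable map into a measurable space 𝒳, and 𝒢 = σ(X) the σ-algebra generated by X. Let T : Ω → ℝ be measurable with T ∈ {0,1} almost surely, and let Y₁ : Ω → ℝ be integrable with Y₁·T integrable. Assume (conditional ignorability) that Y₁ and T are conditionally independent given 𝒢, and (treatment positivity) that E[T | 𝒢] > 0 almost surely. Then E[Y₁ | 𝒢] = E[Y₁·T | 𝒢] / E[T | 𝒢] almost surely; that is, the conditional mean of the potential outcome under treatment is identified by the conditional mean of the observed outcome among the treated. -/

import Mathlib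

open MeasureTheory ProbabilityTheory Filter Set

/-- The σ-algebra generated by a map `X`. -/
abbrev sigmaGen {Ω 𝒳 : Type*} [MeasurableSpace 𝒳] (X : Ω → 𝒳) : MeasurableSpace Ω :=
  MeasurableSpace.comap X inferInstance

section Aux

variable {Ω : Type*} {m : MeasurableSpace Ω} [mΩ : MeasurableSpace Ω] [StandardBorelSpace Ω]

set_option maxHeartbeats 1000000 in
/-- Conditional independence is stable under a.e. modification of the first function. -/
lemma condIndepFun_congr_left {μ : Measure Ω} [IsFiniteMeasure μ] {hm : m ≤ mΩ}
    {Y Y' T : Ω → ℝ} (h : CondIndepFun m hm Y T μ) (hYY' : Y =ᵐ[μ] Y') :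
    CondIndepFun m hm Y' T μ := by
  refine Kernel.IndepFun.congr' h ?_ ?_
  · -- ∀ᵐ a ∂(μ.trim hm), Y =ᵐ[condexpKernel μ m a] Y'
    set N : Set Ω := toMeasurable μ {ω | Y ω ≠ Y' ω} with hNdef
    have hNmeas : MeasurableSet N := measurableSet_toMeasurable _ _
    have hNnull : μ N = 0 := by
      rw [measure_toMeasurable]
      exact hYY'
    have hk : (fun ω => ((condExpKernel μ m ω) N).toReal) =ᵐ[μ] μ⟦N | m⟧ :=
      condExpKernel_ae_eq_condExp hm hNmeas
    have hc : (μ⟦N | m⟧) =ᵐ[μ] (0 : Ω → ℝ) := by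
      have : (N.indicator (fun _ => (1 : ℝ))) =ᵐ[μ] (0 : Ω → ℝ) := by
        filter_upwards [measure_eq_zero_iff_ae_notMem.mp hNnull] with ω hω
        simp [Set.indicator_of_notMem hω]
      calc (μ⟦N | m⟧) =ᵐ[μ] μ[(0 : Ω → ℝ) | m] := condExp_congr_ae this
        _ = 0 := condExp_zero
    have htrim : (fun ω => ((condExpKernel μ m ω) N).toReal) =ᵐ[μ.trim hm] (0 : Ω → ℝ) := by
      refine StronglyMeasurable.ae_eq_trim_of_stronglyMeasurable hm
        (measurable_condExpKernel hNmeas).ennreal_toReal.stronglyMeasurable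
        stronglyMeasurable_const (hk.trans hc)
    filter_upwards [htrim] with a ha
    have hzero : (condExpKernel μ m a) N = 0 := by
      have hfin : (condExpKernel μ m a) N ≠ ⊤ := measure_ne_top _ _
      simpa [ENNReal.toReal_eq_zero_iff, hfin] using ha
    have : (condExpKernel μ m a) {ω | Y ω ≠ Y' ω} = 0 :=
      measure_mono_null (subset_toMeasurable _ _) hzero
    exact this
  · exact Eventually.of_forall fun a => Filter.EventuallyEq.rfl

/-- Pull-out property in set-integral form. -/
lemma setIntegral_mul_condexp (hm : m ≤ mΩ) (μ : Measure Ω) [IsProbabilityMeasure μ]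
    {f g : Ω → ℝ} (hgm : StronglyMeasurable[m] g) (hgb : ∀ᵐ ω ∂μ, ‖g ω‖ ≤ 1)
    (hf : Integrable f μ) {s : Set Ω} (hs : MeasurableSet[m] s) :
    ∫ ω in s, f ω * g ω ∂μ = ∫ ω in s, (μ[f|m]) ω * g ω ∂μ := by
  have hfg : Integrable (fun ω => g ω * f ω) μ :=
    hf.bdd_mul ((hgm.mono hm).aestronglyMeasurable) hgb
  have h1 : μ[g * f|m] =ᵐ[μ] g * μ[f|m] :=
    condExp_stronglyMeasurable_mul_of_bound hm hgm hf 1 hgb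
  calc ∫ ω in s, f ω * g ω ∂μ = ∫ ω in s, g ω * f ω ∂μ := by simp_rw [mul_comm]
    _ = ∫ ω in s, (μ[g * f|m]) ω ∂μ := (setIntegral_condExp hm hfg hs).symm
    _ = ∫ ω in s, g ω * (μ[f|m]) ω ∂μ := integral_congr_ae (ae_restrict_of_ae h1)
    _ = ∫ ω in s, (μ[f|m]) ω * g ω ∂μ := by simp_rw [mul_comm]

set_option maxHeartbeats 1000000 in
/-- **Conditional product rule**: if `Y` and `T` are conditionally independent given `m`, then
`E[Y · 1_{T=1} | m] = E[Y|m] · E[1_{T=1}|m]` a.e. -/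
lemma condexp_mul_indicator_of_condIndepFun [Nonempty Ω] (hm : m ≤ mΩ) (μ : Measure Ω)
    [IsProbabilityMeasure μ] {Y T : Ω → ℝ} (hY : Measurable Y) (hT : Measurable T)
    (hYint : Integrable Y μ) (hindep : CondIndepFun m hm Y T μ) :
    μ[fun ω => Y ω * (T ⁻¹' {1}).indicator (fun _ => (1:ℝ)) ω | m]
      =ᵐ[μ] fun ω => (μ[Y|m]) ω * (μ⟦T ⁻¹' {1} | m⟧) ω := by
  set A : Set Ω := T ⁻¹' {1} with hAdef
  have hA : MeasurableSet A := hT (measurableSet_singleton 1)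
  set ind : Ω → ℝ := A.indicator (fun _ => (1:ℝ)) with hinddef
  set g : Ω → ℝ := μ⟦A | m⟧ with hgdef
  have hind_meas : Measurable ind := measurable_const.indicator hA
  have hind_int : Integrable ind μ := (integrable_const (1:ℝ)).indicator hA
  have hind_bdd : ∀ ω, ‖ind ω‖ ≤ 1 := by
    intro ω
    by_cases h : ω ∈ A <;> simp [ind, Set.indicator_apply, h]
  have hg_meas : StronglyMeasurable[m] g := stronglyMeasurable_condExp
  have hg_bdd : ∀ᵐ ω ∂μ, ‖g ω‖ ≤ 1 := by
    have h0 : 0 ≤ᵐ[μ] g :=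
      condExp_nonneg (Eventually.of_forall fun ω => Set.indicator_nonneg (fun _ _ => zero_le_one) ω)
    have h1 : g ≤ᵐ[μ] μ[(fun _ => (1:ℝ))|m] := by
      refine condExp_mono hind_int (integrable_const 1) (Eventually.of_forall fun ω => ?_)
      by_cases h : ω ∈ A <;> simp [ind, Set.indicator_apply, h]
    rw [condExp_const hm] at h1
    filter_upwards [h0, h1] with ω hω0 hω1
    simp only [Pi.zero_apply] at hω0
    rw [Real.norm_eq_abs, abs_le]
    exact ⟨by linarith, hω1⟩
  -- set-level conditional independence
  have hsets : ∀ B : Set ℝ, MeasurableSet B →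
      (μ⟦Y ⁻¹' B ∩ A | m⟧) =ᵐ[μ] fun ω => (μ⟦Y ⁻¹' B | m⟧) ω * g ω := by
    intro B hB
    have := (condIndepFun_iff m hm Y T hY hT μ).mp hindep (Y ⁻¹' B) A
      ⟨B, hB, rfl⟩ ⟨{1}, measurableSet_singleton 1, rfl⟩
    filter_upwards [this] with ω hω
    simpa using hω
  -- the key identity for indicators of sets in σ(Y)
  have H : ∀ B : Set ℝ, MeasurableSet B → ∀ s : Set Ω, MeasurableSet[m] s →
      ∫ ω in s, (Y ⁻¹' B).indicator (fun _ => (1:ℝ)) ω * ind ω ∂μ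
        = ∫ ω in s, (Y ⁻¹' B).indicator (fun _ => (1:ℝ)) ω * g ω ∂μ := by
    intro B hB s hs
    have hBmeas : MeasurableSet (Y ⁻¹' B) := hY hB
    have hBint : Integrable ((Y ⁻¹' B).indicator (fun _ => (1:ℝ))) μ :=
      (integrable_const (1:ℝ)).indicator hBmeas
    have e1 : ∀ ω, (Y ⁻¹' B).indicator (fun _ => (1:ℝ)) ω * ind ω
        = ((Y ⁻¹' B) ∩ A).indicator (fun _ => (1:ℝ)) ω := by
      intro ω
      by_cases h1 : ω ∈ Y ⁻¹' B <;> by_cases h2 : ω ∈ A <;>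
        simp [ind, Set.indicator_apply, h1, h2]
    have hBAint : Integrable (((Y ⁻¹' B) ∩ A).indicator (fun _ => (1:ℝ))) μ :=
      (integrable_const (1:ℝ)).indicator (hBmeas.inter hA)
    calc ∫ ω in s, (Y ⁻¹' B).indicator (fun _ => (1:ℝ)) ω * ind ω ∂μ
        = ∫ ω in s, ((Y ⁻¹' B) ∩ A).indicator (fun _ => (1:ℝ)) ω ∂μ := by simp_rw [e1]
      _ = ∫ ω in s, (μ⟦(Y ⁻¹' B) ∩ A | m⟧) ω ∂μ := (setIntegral_condExp hm hBAint hs).symm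
      _ = ∫ ω in s, (μ⟦Y ⁻¹' B | m⟧) ω * g ω ∂μ :=
          integral_congr_ae (ae_restrict_of_ae (hsets B hB))
      _ = ∫ ω in s, (Y ⁻¹' B).indicator (fun _ => (1:ℝ)) ω * g ω ∂μ :=
          (setIntegral_mul_condexp hm μ hg_meas hg_bdd hBint hs).symm
  -- extend to simple functions composed with Y
  have Hsimple : ∀ (φ : SimpleFunc ℝ ℝ) (s : Set Ω), MeasurableSet[m] s →
      ∫ ω in s, φ (Y ω) * ind ω ∂μ = ∫ ω in s, φ (Y ω) * g ω ∂μ := by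
    intro φ
    induction φ using SimpleFunc.induction with
    | @const c B hB =>
      intro s hs
      have e : ∀ ω, (SimpleFunc.piecewise B hB (SimpleFunc.const ℝ c)
          (SimpleFunc.const ℝ 0)) (Y ω) = c * (Y ⁻¹' B).indicator (fun _ => (1:ℝ)) ω := by
        intro ω
        by_cases h : Y ω ∈ B <;>
          simp [SimpleFunc.piecewise_apply, Set.indicator_apply, h]
      simp_rw [e, mul_assoc, integral_const_mul]
      rw [H B hB s hs]
    | @add φ ψ _ ih1 ih2 =>
      intro s hs
      obtain ⟨C₁, hC₁⟩ := φ.exists_forall_norm_le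
      obtain ⟨C₂, hC₂⟩ := ψ.exists_forall_norm_le
      have hmeas1 : AEStronglyMeasurable (fun ω => φ (Y ω)) μ :=
        (φ.measurable.comp hY).aestronglyMeasurable
      have hmeas2 : AEStronglyMeasurable (fun ω => ψ (Y ω)) μ :=
        (ψ.measurable.comp hY).aestronglyMeasurable
      have hgint : Integrable g μ := integrable_condExp
      have i1 : Integrable (fun ω => φ (Y ω) * ind ω) μ :=
        hind_int.bdd_mul hmeas1 (Eventually.of_forall fun ω => hC₁ (Y ω))
      have i2 : Integrable (fun ω => ψ (Y ω) * ind ω) μ :=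
        hind_int.bdd_mul hmeas2 (Eventually.of_forall fun ω => hC₂ (Y ω))
      have i3 : Integrable (fun ω => φ (Y ω) * g ω) μ :=
        hgint.bdd_mul hmeas1 (Eventually.of_forall fun ω => hC₁ (Y ω))
      have i4 : Integrable (fun ω => ψ (Y ω) * g ω) μ :=
        hgint.bdd_mul hmeas2 (Eventually.of_forall fun ω => hC₂ (Y ω))
      have e : ∀ (h : Ω → ℝ) ω, (φ + ψ) (Y ω) * h ω = φ (Y ω) * h ω + ψ (Y ω) * h ω := by
        intro h ω
        simp [add_mul]
      simp_rw [e ind, e g]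
      rw [integral_add i1.integrableOn i2.integrableOn,
        integral_add i3.integrableOn i4.integrableOn, ih1 s hs, ih2 s hs]
  -- pass to the limit: ∫_s Y·ind = ∫_s Y·g
  have Hlim : ∀ s : Set Ω, MeasurableSet[m] s →
      ∫ ω in s, Y ω * ind ω ∂μ = ∫ ω in s, Y ω * g ω ∂μ := by
    intro s hs
    set φ : ℕ → SimpleFunc ℝ ℝ := fun n =>
      SimpleFunc.approxOn (id : ℝ → ℝ) measurable_id Set.univ 0 (Set.mem_univ 0) n with hφdef
    have htend : ∀ x : ℝ, Tendsto (fun n => φ n x) atTop (nhds x) := fun x => by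
      simpa using SimpleFunc.tendsto_approxOn (f := (id : ℝ → ℝ)) measurable_id
        (Set.mem_univ 0) (x := x) (by simp)
    have hbound : ∀ n (x : ℝ), ‖φ n x‖ ≤ ‖x‖ + ‖x‖ := fun n x => by
      simpa using SimpleFunc.norm_approxOn_zero_le (f := (id : ℝ → ℝ)) measurable_id
        (Set.mem_univ 0) x n
    have hbd_int : Integrable (fun ω => ‖Y ω‖ + ‖Y ω‖) (μ.restrict s) :=
      (hYint.norm.add hYint.norm).restrict
    have T1 : Tendsto (fun n => ∫ ω in s, φ n (Y ω) * ind ω ∂μ) atTop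
        (nhds (∫ ω in s, Y ω * ind ω ∂μ)) := by
      refine tendsto_integral_of_dominated_convergence _ ?_ hbd_int ?_ ?_
      · intro n
        exact (((φ n).measurable.comp hY).aestronglyMeasurable.mul
          hind_meas.aestronglyMeasurable).restrict
      · intro n
        refine Eventually.of_forall fun ω => ?_
        calc ‖φ n (Y ω) * ind ω‖ = ‖φ n (Y ω)‖ * ‖ind ω‖ := norm_mul _ _
          _ ≤ (‖Y ω‖ + ‖Y ω‖) * 1 :=
            mul_le_mul (hbound n (Y ω)) (hind_bdd ω) (norm_nonneg _)
              (by positivity)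
          _ = ‖Y ω‖ + ‖Y ω‖ := mul_one _
      · exact Eventually.of_forall fun ω => (htend (Y ω)).mul_const _
    have T2 : Tendsto (fun n => ∫ ω in s, φ n (Y ω) * g ω ∂μ) atTop
        (nhds (∫ ω in s, Y ω * g ω ∂μ)) := by
      refine tendsto_integral_of_dominated_convergence _ ?_ hbd_int ?_ ?_
      · intro n
        exact (((φ n).measurable.comp hY).aestronglyMeasurable.mul
          ((hg_meas.mono hm).aestronglyMeasurable)).restrict
      · intro n
        filter_upwards [ae_restrict_of_ae hg_bdd] with ω hω
        calc ‖φ n (Y ω) * g ω‖ = ‖φ n (Y ω)‖ * ‖g ω‖ := norm_mul _ _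
          _ ≤ (‖Y ω‖ + ‖Y ω‖) * 1 :=
            mul_le_mul (hbound n (Y ω)) hω (norm_nonneg _) (by positivity)
          _ = ‖Y ω‖ + ‖Y ω‖ := mul_one _
      · exact Eventually.of_forall fun ω => (htend (Y ω)).mul_const _
    have heq : (fun n => ∫ ω in s, φ n (Y ω) * ind ω ∂μ)
        = fun n => ∫ ω in s, φ n (Y ω) * g ω ∂μ := funext fun n => Hsimple (φ n) s hs
    rw [heq] at T1
    exact tendsto_nhds_unique T1 T2
  -- conclude by uniqueness of conditional expectation
  have hf_int : Integrable (fun ω => Y ω * ind ω) μ := by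
    have := hYint.bdd_mul hind_meas.aestronglyMeasurable
      (Eventually.of_forall hind_bdd)
    exact this.congr (Eventually.of_forall fun ω => mul_comm _ _)
  have hG_int : Integrable (fun ω => (μ[Y|m]) ω * g ω) μ := by
    have := (integrable_condExp (m := m) (μ := μ) (f := Y)).bdd_mul
      ((hg_meas.mono hm).aestronglyMeasurable) hg_bdd
    exact this.congr (Eventually.of_forall fun ω => mul_comm _ _)
  refine (ae_eq_condExp_of_forall_setIntegral_eq hm hf_int
    (fun s _ _ => hG_int.integrableOn) (fun s hs _ => ?_)
    ((stronglyMeasurable_condExp.mul stronglyMeasurable_condExp).aestronglyMeasurable)).symm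
  calc ∫ ω in s, (μ[Y|m]) ω * g ω ∂μ
      = ∫ ω in s, Y ω * g ω ∂μ := (setIntegral_mul_condexp hm μ hg_meas hg_bdd hYint hs).symm
    _ = ∫ ω in s, Y ω * ind ω ∂μ := (Hlim s hs).symm

end Aux

/-- **Identification of the conditional mean of the potential outcome under treatment.**
Under conditional ignorability (`Y₁ ⟂ T | σ(X)`) and treatment positivity
(`E[T | σ(X)] > 0` a.s.), `E[Y₁ | σ(X)] = E[Y₁·T | σ(X)] / E[T | σ(X)]` a.s. -/
theorem conditional_mean_identification
    {Ω 𝒳 : Type*} [MeasurableSpace Ω] [StandardBorelSpace Ω] [Nonempty Ω]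
    [MeasurableSpace 𝒳]
    (P : Measure Ω) [IsProbabilityMeasure P]
    (X : Ω → 𝒳) (hX : Measurable X)
    (T Y₁ : Ω → ℝ) (hT : Measurable T)
    (hT01 : ∀ᵐ ω ∂P, T ω = 0 ∨ T ω = 1)
    (hY₁ : Integrable Y₁ P)
    (hY₁T : Integrable (fun ω => Y₁ ω * T ω) P)
    (hindep : CondIndepFun (sigmaGen X) hX.comap_le Y₁ T P)
    (hpos : ∀ᵐ ω ∂P, 0 < (P[T | sigmaGen X]) ω) :
    P[Y₁ | sigmaGen X]
      =ᵐ[P] fun ω =>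
        (P[fun ω' => Y₁ ω' * T ω' | sigmaGen X]) ω / (P[T | sigmaGen X]) ω := by
  have hm : sigmaGen X ≤ ‹MeasurableSpace Ω› := hX.comap_le
  -- measurable version of Y₁
  set Y' : Ω → ℝ := hY₁.1.mk Y₁ with hY'def
  have hYY' : Y₁ =ᵐ[P] Y' := hY₁.1.ae_eq_mk
  have hY'meas : Measurable Y' := hY₁.1.stronglyMeasurable_mk.measurable
  have hY'int : Integrable Y' P := hY₁.congr hYY'
  have hindep' : CondIndepFun (sigmaGen X) hX.comap_le Y' T P :=
    condIndepFun_congr_left hindep hYY'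
  -- T is a.e. the indicator of A := T⁻¹{1}
  set A : Set Ω := T ⁻¹' {1} with hAdef
  set ind : Ω → ℝ := A.indicator (fun _ => (1:ℝ)) with hinddef
  have hTA : T =ᵐ[P] ind := by
    filter_upwards [hT01] with ω hω
    rcases hω with h0 | h1
    · have : ω ∉ A := by simp [A, h0]
      simp [ind, Set.indicator_of_notMem this, h0]
    · have : ω ∈ A := by simp [A, h1]
      simp [ind, Set.indicator_of_mem this, h1]
  -- conditional product rule
  have hprod : P[fun ω => Y' ω * ind ω | sigmaGen X]
      =ᵐ[P] fun ω => (P[Y'|sigmaGen X]) ω * (P⟦A | sigmaGen X⟧) ω :=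
    condexp_mul_indicator_of_condIndepFun hX.comap_le P hY'meas hT hY'int hindep'
  have h1 : P[fun ω' => Y₁ ω' * T ω' | sigmaGen X]
      =ᵐ[P] P[fun ω => Y' ω * ind ω | sigmaGen X] :=
    condExp_congr_ae (hYY'.mul hTA)
  have h2 : P[Y₁|sigmaGen X] =ᵐ[P] P[Y'|sigmaGen X] := condExp_congr_ae hYY'
  have h3 : P[T|sigmaGen X] =ᵐ[P] P⟦A | sigmaGen X⟧ := condExp_congr_ae hTA
  have hprod' : P[fun ω' => Y₁ ω' * T ω' | sigmaGen X]
      =ᵐ[P] fun ω => (P[Y₁|sigmaGen X]) ω * (P[T|sigmaGen X]) ω := by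
    filter_upwards [h1, h2, h3, hprod] with ω e1 e2 e3 e4
    rw [e1, e4, e2, e3]
  filter_upwards [hpos, hprod'] with ω hω1 hω2
  rw [hω2]
  rw [mul_div_assoc, div_self hω1.ne', mul_one]
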